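/- arXiv:math/0108093 — 2 statements merged into one kernel-verified Lean document; each statement's English description precedes it below -/
import Mathlib

section
/- Let 0 ≤ τ ≤ ∞ and let m ≥ 1 be an integer. Let P(λ, t̃; x) be a complex-valued function of class C^τ on a neighborhood of 0 in ℂ × ℂ^n × ℝ^h, holomorphic in (λ, t̃) for each fixed x. Then there exist r > 0 and ε > 0 such that the function c₀(t; x) := (2πi)^{-1} ∮_{|λ|=r} P(λ, t/λ^m; x) λ^{-1} dλ, defined for |t| < ε and x in a neighborhood of 0, is of class C^τ jointly in (t, x) and holomorphic in t for each fixed x. (Here c₀ is the coefficient of λ^0 in the Laurent series expansion of λ ↦ P(λ, t/λ^m; x): if P(λ, t̃; x) = Σ_{ν,α} P_{ν,α}(x) λ^ν t̃^α, then c₀(t; x) = Σ_{ν=|α|m} P_{ν,α}(x) t^α.) -/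
open Topology Metric MeasureTheory Set intervalIntegral
open scoped ContDiff

set_option synthInstance.maxHeartbeats 1000000
set_option maxHeartbeats 2000000

lemma contDiff_circleMap' (c : ℂ) (r : ℝ) : ContDiff ℝ ∞ (circleMap c r) := by
  have h1 : ContDiff ℝ ∞ (fun θ : ℝ => (θ : ℂ) * Complex.I) :=
    (Complex.ofRealCLM.contDiff.mul contDiff_const)
  have h2 : ContDiff ℝ ∞ (fun θ : ℝ => Complex.exp ((θ : ℂ) * Complex.I)) :=
    ((Complex.contDiff_exp (𝕜 := ℂ)).restrict_scalars ℝ).comp h1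
  exact (contDiff_const.add (contDiff_const.mul h2) :
    ContDiff ℝ ∞ fun θ : ℝ => c + (r:ℂ) * Complex.exp ((θ:ℂ) * Complex.I))

section Param

variable {E : Type} [NormedAddCommGroup E] [NormedSpace ℝ E] [ProperSpace E]

omit [NormedSpace ℝ E] [ProperSpace E] in
lemma slice_cont {G : Type} [NormedAddCommGroup G] {U : Set E} {F : ℝ × E → G}
    (hF : ContinuousOn F (univ ×ˢ U)) {q : E} (hq : q ∈ U) :
    Continuous fun θ : ℝ => F (θ, q) := by
  rw [← continuousOn_univ]
  exact hF.comp (Continuous.continuousOn (by fun_prop)) fun θ _ => ⟨trivial, hq⟩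

lemma contDiffOn_param_integral (k : ℕ) :
    ∀ {G : Type} [NormedAddCommGroup G] [NormedSpace ℝ G] [CompleteSpace G]
      {U : Set E} (_ : IsOpen U) (a b : ℝ) (F : ℝ × E → G),
      ContDiffOn ℝ k F (univ ×ˢ U) →
      ContDiffOn ℝ k (fun q => ∫ θ in a..b, F (θ, q)) U := by
  induction k with
  | zero =>
    intro G _ _ _ U hU a b F hF
    rw [show ((0 : ℕ) : WithTop ℕ∞) = 0 from rfl, contDiffOn_zero] at hF ⊢
    intro q₀ hq₀
    obtain ⟨ρ, hρpos, hρ⟩ : ∃ ρ > 0, closedBall q₀ ρ ⊆ U :=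
      nhds_basis_closedBall.mem_iff.1 (hU.mem_nhds hq₀)
    have hK : IsCompact (uIcc a b ×ˢ closedBall q₀ ρ) :=
      isCompact_uIcc.prod (isCompact_closedBall _ _)
    have hKsub : (uIcc a b ×ˢ closedBall q₀ ρ) ⊆ univ ×ˢ U := fun p hp =>
      ⟨trivial, hρ hp.2⟩
    obtain ⟨M, hM⟩ := hK.exists_bound_of_continuousOn (hF.mono hKsub)
    refine (continuousAt_of_dominated_interval (bound := fun _ => M) ?_ ?_ ?_ ?_).continuousWithinAt
    · filter_upwards [hU.mem_nhds hq₀] with q hq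
      exact (slice_cont hF hq).aestronglyMeasurable
    · filter_upwards [closedBall_mem_nhds q₀ hρpos] with q hq
      filter_upwards with θ hθ
      exact hM (θ, q) ⟨uIoc_subset_uIcc hθ, hq⟩
    · exact intervalIntegrable_const
    · filter_upwards with θ hθ
      have h1 : ContinuousAt F (θ, q₀) :=
        hF.continuousAt ((isOpen_univ.prod hU).mem_nhds ⟨trivial, hq₀⟩)
      exact h1.comp (by fun_prop)
  | succ k ih =>
    intro G _ _ _ U hU a b F hF
    have hUopen : IsOpen (univ ×ˢ U : Set (ℝ × E)) := isOpen_univ.prod hU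
    set F₁ : ℝ × E → E →L[ℝ] G :=
      fun p => (fderiv ℝ F p).comp (ContinuousLinearMap.inr ℝ ℝ E) with hF₁def
    have hcast : ((k + 1 : ℕ) : WithTop ℕ∞) = (k : WithTop ℕ∞) + 1 := by push_cast; ring
    have hF₁ : ContDiffOn ℝ k F₁ (univ ×ˢ U) := by
      have := hF.fderiv_of_isOpen hUopen (le_of_eq hcast.symm)
      exact this.clm_comp contDiffOn_const
    have hdiffF : ∀ p ∈ (univ ×ˢ U : Set (ℝ × E)), DifferentiableAt ℝ F p := by
      intro p hp
      have h1 : DifferentiableOn ℝ F (univ ×ˢ U) :=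
        hF.differentiableOn (by rw [hcast]; simp)
      exact h1.differentiableAt (hUopen.mem_nhds hp)
    have key : ∀ q₀ ∈ U, HasFDerivAt (fun q => ∫ θ in a..b, F (θ, q))
        (∫ θ in a..b, F₁ (θ, q₀)) q₀ := by
      intro q₀ hq₀
      obtain ⟨ρ, hρpos, hρ⟩ : ∃ ρ > 0, closedBall q₀ ρ ⊆ U :=
        nhds_basis_closedBall.mem_iff.1 (hU.mem_nhds hq₀)
      have hK : IsCompact (uIcc a b ×ˢ closedBall q₀ ρ) :=
        isCompact_uIcc.prod (isCompact_closedBall _ _)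
      have hKsub : (uIcc a b ×ˢ closedBall q₀ ρ) ⊆ univ ×ˢ U := fun p hp =>
        ⟨trivial, hρ hp.2⟩
      obtain ⟨M, hM⟩ := hK.exists_bound_of_continuousOn (hF₁.continuousOn.mono hKsub)
      apply intervalIntegral.hasFDerivAt_integral_of_dominated_of_fderiv_le
        (F := fun q θ => F (θ, q)) (F' := fun q θ => F₁ (θ, q)) (bound := fun _ => M) (ball_mem_nhds q₀ hρpos)
      · filter_upwards [hU.mem_nhds hq₀] with q hq
        exact (slice_cont hF.continuousOn hq).aestronglyMeasurable
      · exact ((slice_cont hF.continuousOn hq₀).continuousOn).intervalIntegrable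
      · exact (slice_cont hF₁.continuousOn hq₀).aestronglyMeasurable
      · filter_upwards with θ hθ
        intro q hq
        exact hM (θ, q) ⟨uIoc_subset_uIcc hθ, ball_subset_closedBall hq⟩
      · exact intervalIntegrable_const
      · filter_upwards with θ hθ
        intro q hq
        have h1 : HasFDerivAt F (fderiv ℝ F (θ, q)) (θ, q) :=
          (hdiffF (θ, q) ⟨trivial, hρ (ball_subset_closedBall hq)⟩).hasFDerivAt
        exact h1.comp q (hasFDerivAt_prodMk_right θ q)
    rw [hcast, contDiffOn_succ_iff_fderiv_of_isOpen hU]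
    refine ⟨fun q hq => ((key q hq).differentiableAt).differentiableWithinAt, by simp, ?_⟩
    have h2 : ContDiffOn ℝ k (fun q => ∫ θ in a..b, F₁ (θ, q)) U := ih hU a b F₁ hF₁
    exact h2.congr fun q hq => (key q hq).fderiv

lemma contDiffOn_param_integral_enat (τ : ℕ∞)
    {G : Type} [NormedAddCommGroup G] [NormedSpace ℝ G] [CompleteSpace G]
    {U : Set E} (hU : IsOpen U) (a b : ℝ) (F : ℝ × E → G)
    (hF : ContDiffOn ℝ τ F (univ ×ˢ U)) :
    ContDiffOn ℝ τ (fun q => ∫ θ in a..b, F (θ, q)) U := by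
  induction τ using ENat.recTopCoe with
  | top =>
    rw [show (((⊤ : ℕ∞) : WithTop ℕ∞)) = ∞ from rfl] at hF ⊢
    rw [contDiffOn_infty]
    exact fun k => contDiffOn_param_integral k hU a b F (hF.of_le (by exact_mod_cast le_top))
  | coe k =>
    exact_mod_cast contDiffOn_param_integral k hU a b F (by exact_mod_cast hF)

end Param

lemma lipschitzOnWith_of_holo {H : Type*} [NormedAddCommGroup H] [NormedSpace ℂ H]
    {f : H → ℂ} {t₀ : H} {ρ M : ℝ} (hρ : 0 < ρ)
    (hd : ∀ t ∈ closedBall t₀ (4 * ρ), DifferentiableAt ℂ f t)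
    (hb : ∀ t ∈ closedBall t₀ (4 * ρ), ‖f t‖ ≤ M) :
    LipschitzOnWith (Real.nnabs ((2 * M + 1) / ρ)) f (ball t₀ ρ) := by
  have hM : 0 ≤ M :=
    le_trans (norm_nonneg _) (hb t₀ (by simp [mem_closedBall]; positivity))
  apply LipschitzOnWith.of_dist_le_mul
  intro t₁ h₁ t₂ h₂
  rcases eq_or_ne t₂ t₁ with rfl | hne
  · simp
  have hd0 : (0:ℝ) < ‖t₂ - t₁‖ := by
    rw [norm_pos_iff]; exact sub_ne_zero.2 hne
  set d : ℝ := ‖t₂ - t₁‖ with hdd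
  set R : ℝ := 3 * ρ / d with hRd
  have hRpos : 0 < R := by positivity
  set φ : ℂ → ℂ := fun s => f (t₁ + s • (t₂ - t₁)) with hφdef
  have hmem : ∀ s ∈ ball (0:ℂ) R, t₁ + s • (t₂ - t₁) ∈ closedBall t₀ (4 * ρ) := by
    intro s hs
    rw [mem_closedBall]
    have h1 : dist (t₁ + s • (t₂ - t₁)) t₁ = ‖s‖ * d := by
      rw [dist_eq_norm]; simp [norm_smul, hdd]
    calc dist (t₁ + s • (t₂ - t₁)) t₀ ≤ dist (t₁ + s • (t₂ - t₁)) t₁ + dist t₁ t₀ :=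
          dist_triangle _ _ _
      _ ≤ ‖s‖ * d + ρ := by
          rw [h1]
          have := le_of_lt (mem_ball.1 h₁)
          linarith
      _ ≤ 4 * ρ := by
          have hs' : ‖s‖ < R := by simpa [mem_ball, dist_zero_right] using hs
          have : ‖s‖ * d ≤ R * d := by nlinarith [norm_nonneg s]
          have hRd' : R * d = 3 * ρ := by rw [hRd]; field_simp
          nlinarith
  have hφd : DifferentiableOn ℂ φ (ball (0:ℂ) R) := by
    intro s hs
    have h2 : DifferentiableAt ℂ (fun s : ℂ => t₁ + s • (t₂ - t₁)) s :=
      ((differentiableAt_id).smul_const (t₂ - t₁)).const_add t₁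
    exact ((hd _ (hmem s hs)).comp s h2).differentiableWithinAt
  have hmaps : MapsTo φ (ball (0:ℂ) R) (ball (φ 0) (2 * M + 1)) := by
    intro s hs
    rw [mem_ball, dist_eq_norm]
    have h0 : (0:ℂ) ∈ ball (0:ℂ) R := by simpa using hRpos
    have b1 := hb _ (hmem s hs)
    have b2 := hb _ (hmem 0 h0)
    calc ‖φ s - φ 0‖ ≤ ‖φ s‖ + ‖φ 0‖ := norm_sub_le _ _
      _ ≤ M + M := add_le_add b1 b2
      _ < 2 * M + 1 := by linarith
  have h1R : (1:ℂ) ∈ ball (0:ℂ) R := by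
    rw [mem_ball, dist_zero_right, norm_one, hRd]
    rw [lt_div_iff₀ hd0, one_mul]
    have : d < 2 * ρ := by
      calc d = dist t₂ t₁ := by rw [hdd, dist_eq_norm]
        _ ≤ dist t₂ t₀ + dist t₀ t₁ := dist_triangle _ _ _
        _ < ρ + ρ := by rw [dist_comm t₀ t₁]; exact add_lt_add (mem_ball.1 h₂) (mem_ball.1 h₁)
        _ = 2 * ρ := by ring
    linarith
  have key := Complex.dist_le_div_mul_dist_of_mapsTo_ball hφd (hmaps.mono_right ball_subset_closedBall) h1R
  have hφ1 : φ 1 = f t₂ := by simp [hφdef]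
  have hφ0 : φ 0 = f t₁ := by simp [hφdef]
  rw [hφ1, hφ0] at key
  have hcoe : ((Real.nnabs ((2 * M + 1) / ρ)) : ℝ) = (2 * M + 1) / ρ := by
    rw [Real.coe_nnabs, abs_of_nonneg (by positivity)]
  rw [hcoe, dist_comm (f t₁) (f t₂), dist_comm t₁ t₂]
  calc dist (f t₂) (f t₁) ≤ (2 * M + 1) / R * dist 1 0 := key
    _ = (2 * M + 1) / R := by simp
    _ = (2 * M + 1) * d / (3 * ρ) := by rw [hRd]; field_simp
    _ ≤ (2 * M + 1) / ρ * d := by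
        rw [div_mul_eq_mul_div, div_le_div_iff₀ (by positivity) (by positivity)]
        nlinarith [mul_nonneg (mul_nonneg (by linarith : (0:ℝ) ≤ 2*M+1) hd0.le) hρ.le]
    _ = (2 * M + 1) / ρ * dist t₂ t₁ := by rw [hdd, dist_eq_norm]

lemma clm_decomp {n : ℕ} (L : (Fin n → ℂ) →L[ℂ] ℂ) :
    L = ∑ i, (ContinuousLinearMap.proj (R := ℂ) (φ := fun _ : Fin n => ℂ) i).smulRight
      (L (Pi.single i 1)) := by
  ext w
  have hw : w = ∑ i, w i • (Pi.single i (1:ℂ) : Fin n → ℂ) := by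
    funext j
    simp [Finset.sum_apply, Pi.single_apply, eq_comm]
  conv_lhs => rw [hw]
  rw [map_sum]
  simp [ContinuousLinearMap.sum_apply, ContinuousLinearMap.smulRight_apply,
    ContinuousLinearMap.proj_apply, _root_.map_smul]

/-- Lemma 4.3 of Kim–Zaitsev (resolution of singularities with smooth parameters): if
`P(λ, t̃; x)` is `C^τ` near `0`, holomorphic in `(λ, t̃)` for each fixed `x`, then the
constant Laurent coefficient
`c₀(t; x) = (2πi)⁻¹ ∮_{|λ|=r} P(λ, t/λ^m; x) λ⁻¹ dλ`
of `λ ↦ P(λ, t/λ^m; x)` is of class `C^τ` jointly in `(t, x)` and holomorphic in `t` for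
each fixed `x`, for `t` and `x` in suitable neighborhoods of `0`. -/
theorem laurent_constant_coefficient_smooth {n h m : ℕ} (τ : ℕ∞) (hm : 1 ≤ m)
    (Ω : Set (ℂ × (Fin n → ℂ) × (Fin h → ℝ))) (hΩ : IsOpen Ω)
    (hΩ0 : (0 : ℂ × (Fin n → ℂ) × (Fin h → ℝ)) ∈ Ω)
    (P : ℂ × (Fin n → ℂ) × (Fin h → ℝ) → ℂ)
    (hPsmooth : ContDiffOn ℝ τ P Ω)
    (hPhol : ∀ x : Fin h → ℝ,
      DifferentiableOn ℂ (fun v : ℂ × (Fin n → ℂ) => P (v.1, v.2, x))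
        {v : ℂ × (Fin n → ℂ) | (v.1, v.2, x) ∈ Ω}) :
    ∃ r > (0 : ℝ), ∃ ε > (0 : ℝ), ∃ X ∈ 𝓝 (0 : Fin h → ℝ),
      ContDiffOn ℝ τ
        (fun q : (Fin n → ℂ) × (Fin h → ℝ) =>
          (2 * (Real.pi : ℂ) * Complex.I)⁻¹ •
            ∮ z in C(0, r), P (z, (z ^ m)⁻¹ • q.1, q.2) * z⁻¹)
        (ball (0 : Fin n → ℂ) ε ×ˢ X) ∧
      ∀ x ∈ X, DifferentiableOn ℂ
        (fun t : Fin n → ℂ =>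
          (2 * (Real.pi : ℂ) * Complex.I)⁻¹ •
            ∮ z in C(0, r), P (z, (z ^ m)⁻¹ • t, x) * z⁻¹)
        (ball (0 : Fin n → ℂ) ε) := by
  obtain ⟨δ, δpos, hδ⟩ : ∃ δ > 0, closedBall (0 : ℂ × (Fin n → ℂ) × (Fin h → ℝ)) δ ⊆ Ω :=
    nhds_basis_closedBall.mem_iff.1 (hΩ.mem_nhds hΩ0)
  set r : ℝ := min δ 1 with hrdef
  have hr0 : 0 < r := lt_min δpos one_pos
  have hrδ : r ≤ δ := min_le_left _ _
  set ε : ℝ := δ * r ^ m with hεdef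
  have hε0 : 0 < ε := by positivity
  set X : Set (Fin h → ℝ) := ball 0 δ with hXdef
  have hrm : (0:ℝ) < r ^ m := by positivity
  have hzne : ∀ θ : ℝ, circleMap 0 r θ ≠ 0 := fun θ => circleMap_ne_center hr0.ne'
  have hznorm : ∀ θ : ℝ, ‖circleMap 0 r θ‖ = r := by
    intro θ
    rw [norm_circleMap_zero, abs_of_pos hr0]
  -- membership of the integrand's argument in Ω
  have hmem : ∀ (θ : ℝ) (q : (Fin n → ℂ) × (Fin h → ℝ)),
      q ∈ ball (0 : Fin n → ℂ) ε ×ˢ X →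
      (circleMap 0 r θ, (circleMap 0 r θ ^ m)⁻¹ • q.1, q.2) ∈ Ω := by
    rintro θ ⟨t, x⟩ ⟨ht, hx⟩
    apply hδ
    rw [mem_closedBall, dist_zero_right, Prod.norm_def, Prod.norm_def]
    have h1 : ‖circleMap 0 r θ‖ ≤ δ := by rw [hznorm]; exact hrδ
    have h2 : ‖(circleMap 0 r θ ^ m)⁻¹ • t‖ ≤ δ := by
      rw [norm_smul, norm_inv, norm_pow, hznorm]
      have ht' : ‖t‖ ≤ ε := le_of_lt (mem_ball_zero_iff.1 ht)
      calc (r ^ m)⁻¹ * ‖t‖ ≤ (r ^ m)⁻¹ * ε := by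
            exact mul_le_mul_of_nonneg_left ht' (by positivity)
        _ = δ := by rw [hεdef]; field_simp
    have h3 : ‖x‖ ≤ δ := le_of_lt (mem_ball_zero_iff.1 hx)
    exact max_le h1 (max_le h2 h3)
  set U : Set ((Fin n → ℂ) × (Fin h → ℝ)) := ball (0 : Fin n → ℂ) ε ×ˢ X with hUdef
  have hUopen : IsOpen U := isOpen_ball.prod isOpen_ball
  -- the integrand as a function of (θ, q)
  set w : ℝ → ℂ := fun θ => (circleMap 0 r θ ^ m)⁻¹ with hwdef
  have hwsm : ContDiff ℝ ∞ w :=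
    ((contDiff_circleMap' 0 r).pow m).inv fun θ => pow_ne_zero _ (hzne θ)
  set F : ℝ × ((Fin n → ℂ) × (Fin h → ℝ)) → ℂ := fun p =>
    (circleMap 0 r p.1 * Complex.I) *
      (P (circleMap 0 r p.1, w p.1 • p.2.1, p.2.2) * (circleMap 0 r p.1)⁻¹) with hFdef
  have htole : (↑τ : WithTop ℕ∞) ≤ ∞ := by exact_mod_cast le_top
  -- smoothness of F
  have hΨ : ContDiff ℝ ∞ (fun p : ℝ × ((Fin n → ℂ) × (Fin h → ℝ)) =>
      ((circleMap 0 r p.1 : ℂ), w p.1 • p.2.1, p.2.2)) := by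
    refine ContDiff.prodMk ((contDiff_circleMap' 0 r).comp contDiff_fst) (ContDiff.prodMk ?_ ?_)
    · rw [contDiff_pi]
      intro i
      exact (hwsm.comp contDiff_fst).mul (by fun_prop)
    · exact contDiff_snd.comp contDiff_snd
  have hFsm : ContDiffOn ℝ τ F (univ ×ˢ U) := by
    have hPΨ : ContDiffOn ℝ τ
        (fun p : ℝ × ((Fin n → ℂ) × (Fin h → ℝ)) =>
          P ((circleMap 0 r p.1 : ℂ), w p.1 • p.2.1, p.2.2)) (univ ×ˢ U) := by
      apply hPsmooth.comp ((hΨ.of_le htole).contDiffOn)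
      rintro ⟨θ, q⟩ ⟨-, hq⟩
      exact hmem θ q hq
    have hc1 : ContDiff ℝ ∞ (fun p : ℝ × ((Fin n → ℂ) × (Fin h → ℝ)) =>
        circleMap 0 r p.1 * Complex.I) :=
      ((contDiff_circleMap' 0 r).comp contDiff_fst).mul contDiff_const
    have hc2 : ContDiff ℝ ∞ (fun p : ℝ × ((Fin n → ℂ) × (Fin h → ℝ)) =>
        (circleMap 0 r p.1)⁻¹) :=
      ((contDiff_circleMap' 0 r).comp contDiff_fst).inv fun p => hzne p.1
    exact ((hc1.of_le htole).contDiffOn).mul (hPΨ.mul ((hc2.of_le htole).contDiffOn))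
  -- the circle integral as an interval integral of F
  have key : ∀ q : (Fin n → ℂ) × (Fin h → ℝ),
      (∮ z in C(0, r), P (z, (z ^ m)⁻¹ • q.1, q.2) * z⁻¹) =
        ∫ θ in (0:ℝ)..2 * Real.pi, F (θ, q) := by
    intro q
    simp only [circleIntegral, deriv_circleMap, hFdef, hwdef, smul_eq_mul]
  refine ⟨r, hr0, ε, hε0, X, ball_mem_nhds _ δpos, ?_, ?_⟩
  · -- C^τ smoothness
    simp only [key]
    exact (contDiffOn_param_integral_enat τ hUopen 0 (2 * Real.pi) F hFsm).const_smul _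
  · -- holomorphy in t for fixed x
    intro x hx t₀ ht₀
    obtain ⟨ρ0, hρ0, hballs⟩ : ∃ ρ0 > 0, ball t₀ ρ0 ⊆ ball (0 : Fin n → ℂ) ε :=
      nhds_basis_ball.mem_iff.1 (isOpen_ball.mem_nhds ht₀)
    set ρ : ℝ := ρ0 / 5 with hρdef
    have hρ : 0 < ρ := by positivity
    have hsub : closedBall t₀ (4 * ρ) ⊆ ball (0 : Fin n → ℂ) ε := by
      intro t htm
      apply hballs
      rw [mem_ball]
      calc dist t t₀ ≤ 4 * ρ := mem_closedBall.1 htm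
        _ < ρ0 := by rw [hρdef]; linarith
    set f : ℝ → (Fin n → ℂ) → ℂ := fun θ t => F (θ, (t, x)) with hfdef
    have hholo : ∀ (θ : ℝ) (t : Fin n → ℂ), t ∈ ball (0 : Fin n → ℂ) ε →
        DifferentiableAt ℂ (f θ) t := by
      intro θ t ht
      have hV : IsOpen {v : ℂ × (Fin n → ℂ) | (v.1, v.2, x) ∈ Ω} :=
        hΩ.preimage (by fun_prop)
      have hPx : DifferentiableAt ℂ (fun v : ℂ × (Fin n → ℂ) => P (v.1, v.2, x))
          ((circleMap 0 r θ : ℂ), w θ • t) := by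
        apply (hPhol x).differentiableAt (hV.mem_nhds ?_)
        exact hmem θ (t, x) ⟨ht, hx⟩
      have hι : DifferentiableAt ℂ (fun t : Fin n → ℂ => ((circleMap 0 r θ : ℂ), w θ • t)) t :=
        (differentiableAt_const _).prodMk ((differentiableAt_id).const_smul (w θ))
      have hcomp := hPx.comp t hι
      have : DifferentiableAt ℂ (fun t : Fin n → ℂ => P ((circleMap 0 r θ : ℂ), w θ • t, x)) t :=
        hcomp
      simpa only [hfdef, hFdef] using ((this.mul_const ((circleMap 0 r θ)⁻¹)).const_mul
        (circleMap 0 r θ * Complex.I))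
    -- uniform bound
    have hK2 : IsCompact (uIcc (0:ℝ) (2 * Real.pi) ×ˢ closedBall t₀ (4 * ρ)) :=
      isCompact_uIcc.prod (isCompact_closedBall _ _)
    have hcont2 : ContinuousOn (fun p : ℝ × (Fin n → ℂ) => f p.1 p.2)
        (uIcc (0:ℝ) (2 * Real.pi) ×ˢ closedBall t₀ (4 * ρ)) := by
      apply hFsm.continuousOn.comp (Continuous.continuousOn (by fun_prop))
      rintro ⟨θ, t⟩ ⟨-, htm⟩
      exact ⟨trivial, hsub htm, hx⟩
    obtain ⟨M, hM⟩ := hK2.exists_bound_of_continuousOn hcont2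
    -- candidate derivative and its measurability
    set D : ℝ → (Fin n → ℂ) →L[ℂ] ℂ := fun θ => fderiv ℂ (f θ) t₀ with hDdef
    set c : ℕ → ℝ := fun k => ρ * ((k : ℝ) + 1)⁻¹ with hcdef
    have hc0 : ∀ k, 0 < c k := by
      intro k
      rw [hcdef]
      positivity
    have hcρ : ∀ k, c k ≤ ρ := by
      intro k
      rw [hcdef]
      calc ρ * ((k : ℝ) + 1)⁻¹ ≤ ρ * 1 := by
            apply mul_le_mul_of_nonneg_left _ hρ.le
            rw [inv_le_one_iff₀]
            right; simp
        _ = ρ := mul_one ρ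
    have hsingle : ∀ i : Fin n, ‖(Pi.single i (1:ℂ) : Fin n → ℂ)‖ = 1 := by
      intro i
      rw [Pi.norm_single, norm_one]
    have hpt : ∀ (k : ℕ) (i : Fin n), t₀ + ((c k : ℝ) : ℂ) • (Pi.single i (1:ℂ) : Fin n → ℂ)
        ∈ ball (0 : Fin n → ℂ) ε := by
      intro k i
      apply hsub
      rw [mem_closedBall, dist_eq_norm]
      have : t₀ + ((c k : ℝ) : ℂ) • (Pi.single i (1:ℂ) : Fin n → ℂ) - t₀
          = ((c k : ℝ) : ℂ) • (Pi.single i (1:ℂ) : Fin n → ℂ) := by rw [add_sub_cancel_left]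
      rw [this, norm_smul, hsingle, mul_one, Complex.norm_real, Real.norm_eq_abs,
        abs_of_pos (hc0 k)]
      linarith [hcρ k, hρ]
    set A : ℕ → ℝ → (Fin n → ℂ) →L[ℂ] ℂ := fun k θ =>
      ∑ i, (ContinuousLinearMap.proj (R := ℂ) (φ := fun _ : Fin n => ℂ) i).smulRight
        ((((c k : ℝ) : ℂ))⁻¹ *
          (f θ (t₀ + ((c k : ℝ) : ℂ) • (Pi.single i (1:ℂ) : Fin n → ℂ)) - f θ t₀)) with hAdef
    have hAcont : ∀ k, Continuous (A k) := by
      intro k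
      apply continuous_finset_sum
      intro i _
      apply ((ContinuousLinearMap.smulRightL ℂ (Fin n → ℂ) ℂ
        (ContinuousLinearMap.proj i)).continuous).comp
      apply Continuous.mul continuous_const
      apply Continuous.sub
      · exact slice_cont hFsm.continuousOn (show ((t₀ + _ • _ : Fin n → ℂ), x) ∈ U from
          ⟨hpt k i, hx⟩)
      · exact slice_cont hFsm.continuousOn (show ((t₀ : Fin n → ℂ), x) ∈ U from ⟨ht₀, hx⟩)
    have hAtendsto : ∀ θ, Filter.Tendsto (fun k => A k θ) Filter.atTop (𝓝 (D θ)) := by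
      intro θ
      rw [clm_decomp (D θ)]
      apply tendsto_finset_sum
      intro i _
      apply Filter.Tendsto.comp
        ((ContinuousLinearMap.smulRightL ℂ (Fin n → ℂ) ℂ
          (ContinuousLinearMap.proj i)).continuous).continuousAt
      -- coefficient convergence via the derivative along the line
      have hfd : HasFDerivAt (f θ) (D θ) t₀ := (hholo θ t₀ ht₀).hasFDerivAt
      have hline : HasDerivAt (fun s : ℂ => t₀ + s • (Pi.single i (1:ℂ) : Fin n → ℂ))
          ((Pi.single i (1:ℂ) : Fin n → ℂ)) 0 := by
        have := ((hasDerivAt_id (0:ℂ)).smul_const ((Pi.single i (1:ℂ) : Fin n → ℂ))).const_add t₀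
        simpa using this
      have heq : t₀ + (0:ℂ) • (Pi.single i (1:ℂ) : Fin n → ℂ) = t₀ := by simp
      have hfd' : HasFDerivAt (f θ) (D θ)
          (t₀ + (0:ℂ) • (Pi.single i (1:ℂ) : Fin n → ℂ)) := by rw [heq]; exact hfd
      have hcomp : HasDerivAt (fun s : ℂ => f θ (t₀ + s • (Pi.single i (1:ℂ) : Fin n → ℂ)))
          (D θ (Pi.single i (1:ℂ) : Fin n → ℂ)) 0 := hfd'.comp_hasDerivAt (f := fun s : ℂ => t₀ + s • (Pi.single i (1:ℂ) : Fin n → ℂ)) 0 hline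
      have hslope := hasDerivAt_iff_tendsto_slope.1 hcomp
      have hcseq : Filter.Tendsto (fun k : ℕ => ((c k : ℝ) : ℂ)) Filter.atTop (𝓝[≠] (0:ℂ)) := by
        apply tendsto_nhdsWithin_of_tendsto_nhds_of_eventually_within
        · have h1 : Filter.Tendsto (fun k : ℕ => c k) Filter.atTop (𝓝 0) := by
            rw [hcdef]
            have : Filter.Tendsto (fun n : ℕ => 1 / ((n : ℝ) + 1)) Filter.atTop (𝓝 0) :=
              tendsto_one_div_add_atTop_nhds_zero_nat
            have h2 := this.const_mul ρ
            simpa [one_div, mul_zero] using h2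
          have := (Complex.continuous_ofReal.tendsto 0).comp h1
          simpa [Function.comp_def] using this
        · filter_upwards with k
          exact Complex.ofReal_ne_zero.2 (hc0 k).ne'
      have := hslope.comp hcseq
      convert this using 2 with k
      simp only [Function.comp_apply, slope_def_field, heq]
      rw [div_eq_inv_mul]
      simp [sub_zero]
    have hD_meas : AEStronglyMeasurable D (volume.restrict (Set.uIoc (0:ℝ) (2 * Real.pi))) := by
      apply StronglyMeasurable.aestronglyMeasurable
      apply stronglyMeasurable_of_tendsto Filter.atTop (fun k => (hAcont k).stronglyMeasurable)
      rw [tendsto_pi_nhds]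
      exact hAtendsto
    -- differentiation under the integral sign
    have hmain := intervalIntegral.hasFDerivAt_integral_of_dominated_loc_of_lip
      (𝕜 := ℂ) (μ := volume) (F := fun t θ => f θ t) (F' := D) (x₀ := t₀)
      (a := 0) (b := 2 * Real.pi) (bound := fun _ => (2 * M + 1) / ρ) (ball_mem_nhds t₀ hρ) ?_ ?_ hD_meas ?_ ?_ ?_
    · -- final assembly
      have keyx : ∀ t : Fin n → ℂ,
          (∮ z in C(0, r), P (z, (z ^ m)⁻¹ • t, x) * z⁻¹) =
            ∫ θ in (0:ℝ)..2 * Real.pi, f θ t := fun t => key (t, x)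
      simp only [keyx]
      exact ((hmain.2.differentiableAt).fun_const_smul _).differentiableWithinAt
    · filter_upwards [isOpen_ball.mem_nhds (mem_ball_self hρ)] with t ht
      have ht' : t ∈ ball (0 : Fin n → ℂ) ε := hsub (ball_subset_closedBall.trans
        (closedBall_subset_closedBall (by linarith)) ht)
      exact (slice_cont hFsm.continuousOn (show ((t : Fin n → ℂ), x) ∈ U from
        ⟨ht', hx⟩)).aestronglyMeasurable
    · exact (slice_cont hFsm.continuousOn (show ((t₀ : Fin n → ℂ), x) ∈ U from
        ⟨ht₀, hx⟩)).continuousOn.intervalIntegrable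
    · filter_upwards with θ hθ
      apply lipschitzOnWith_of_holo hρ
      · intro t htm
        exact hholo θ t (hsub htm)
      · intro t htm
        exact hM (θ, t) ⟨uIoc_subset_uIcc hθ, htm⟩
    · exact intervalIntegrable_const
    · filter_upwards with θ hθ
      exact (hholo θ t₀ ht₀).hasFDerivAt
end

section
/- Let h ≥ 0 and g ≥ 1 be integers. Let R(λ, t̃) be a holomorphic function on a neighborhood of 0 in ℂ × ℂ^n satisfying R(λ, t̃) = o(|(λ, t̃)|^h) as (λ, t̃) → 0, and let δ(λ) be a holomorphic function on a neighborhood of 0 in ℂ with vanishing order exactly g at λ = 0, i.e. δ(λ) = λ^g u(λ) with u holomorphic and u(0) ≠ 0. Then there exist r > 0 and ε > 0 such that the function c₀(t) := (2πi)^{-1} ∮_{|λ|=r} R(λ, t/δ(λ)) λ^{-1} dλ is well defined and holomorphic for |t| < ε, and c₀(t) = o(|t|^{h/(g+1)}) as t → 0. -/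
open Topology Metric Asymptotics MeasureTheory

set_option maxHeartbeats 2000000
set_option synthInstance.maxHeartbeats 400000

/-- Cauchy estimate for the Fréchet derivative of a holomorphic function on a ball
in a complex normed space, obtained by restricting to complex lines. -/
private lemma aux_norm_fderiv_le {E : Type*} [NormedAddCommGroup E] [NormedSpace ℂ E]
    {f : E → ℂ} {x : E} {d M : ℝ} (hd : 0 < d)
    (hf : DifferentiableOn ℂ f (ball x (2 * d)))
    (hM : ∀ y ∈ ball x (2 * d), ‖f y‖ ≤ M) :
    ‖fderiv ℂ f x‖ ≤ M / d := by
  have hM0 : 0 ≤ M := (norm_nonneg _).trans (hM x (mem_ball_self (by linarith)))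
  refine ContinuousLinearMap.opNorm_le_bound _ (by positivity) fun e => ?_
  rcases eq_or_ne e 0 with rfl | he
  · simp
  have hne : 0 < ‖e‖ := norm_pos_iff.mpr he
  have hmem : ∀ s : ℂ, ‖s‖ ≤ d / ‖e‖ → x + s • e ∈ ball x (2 * d) := by
    intro s hs
    rw [mem_ball, dist_eq_norm, add_sub_cancel_left, norm_smul]
    calc ‖s‖ * ‖e‖ ≤ d / ‖e‖ * ‖e‖ := by gcongr
      _ = d := div_mul_cancel₀ _ hne.ne'
      _ < 2 * d := by linarith
  have hdin : ∀ s : ℂ, DifferentiableAt ℂ (fun s : ℂ => x + s • e) s := fun s =>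
    (differentiableAt_id.smul_const e).const_add x
  have hdφ : DifferentiableOn ℂ (fun s : ℂ => f (x + s • e)) (closedBall 0 (d / ‖e‖)) := by
    intro s hs
    have hs' : ‖s‖ ≤ d / ‖e‖ := by simpa [mem_closedBall, dist_eq_norm] using hs
    have := (hf.differentiableAt (isOpen_ball.mem_nhds (hmem s hs'))).comp s (hdin s)
    exact this.differentiableWithinAt
  have hdc : DiffContOnCl ℂ (fun s : ℂ => f (x + s • e)) (ball 0 (d / ‖e‖)) :=
    ⟨hdφ.mono ball_subset_closedBall, hdφ.continuousOn.mono closure_ball_subset_closedBall⟩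
  have hsp : ∀ z ∈ sphere (0 : ℂ) (d / ‖e‖), ‖f (x + z • e)‖ ≤ M := by
    intro z hz
    have hz' : ‖z‖ = d / ‖e‖ := by simpa [mem_sphere, dist_eq_norm] using hz
    exact hM _ (hmem z hz'.le)
  have hder : HasDerivAt (fun s : ℂ => f (x + s • e)) (fderiv ℂ f x e) 0 := by
    have h1 : HasDerivAt (fun s : ℂ => x + s • e) e 0 := by
      simpa using ((hasDerivAt_id (0 : ℂ)).smul_const e).const_add x
    have h2 : HasFDerivAt f (fderiv ℂ f x) ((fun s : ℂ => x + s • e) 0) := by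
      have : ((fun s : ℂ => x + s • e) 0) = x := by simp
      rw [this]
      exact (hf.differentiableAt (isOpen_ball.mem_nhds (mem_ball_self (by linarith)))).hasFDerivAt
    have hcomp := h2.comp_hasDerivAt 0 h1
    exact hcomp
  have hb := Complex.norm_deriv_le_of_forall_mem_sphere_norm_le (div_pos hd hne) hdc hsp
  rw [hder.deriv] at hb
  calc ‖fderiv ℂ f x e‖ ≤ M / (d / ‖e‖) := hb
    _ = M / d * ‖e‖ := by rw [div_div_eq_mul_div, mul_div_right_comm]

/-- Lemma 4.4 of Kim–Zaitsev: if `R(λ, t̃)` is holomorphic near `0` with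
`R(λ, t̃) = o(|(λ, t̃)|^h)` and `δ(λ) = λ^g u(λ)` with `u` holomorphic, `u(0) ≠ 0`, then
the constant Laurent coefficient
`c₀(t) = (2πi)⁻¹ ∮_{|λ|=r} R(λ, t/δ(λ)) λ⁻¹ dλ`
of `λ ↦ R(λ, t/δ(λ))` is holomorphic near `0` and satisfies
`c₀(t) = o(|t|^{h/(g+1)})` as `t → 0`. -/
theorem laurent_constant_coefficient_littleO {n h g : ℕ} (hg : 1 ≤ g)
    (Ω : Set (ℂ × (Fin n → ℂ))) (hΩ : IsOpen Ω) (hΩ0 : (0 : ℂ × (Fin n → ℂ)) ∈ Ω)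
    (R : ℂ × (Fin n → ℂ) → ℂ) (hRhol : DifferentiableOn ℂ R Ω)
    (hRo : R =o[𝓝 0] fun v : ℂ × (Fin n → ℂ) => ‖v‖ ^ h)
    (D : Set ℂ) (hD : IsOpen D) (hD0 : (0 : ℂ) ∈ D)
    (δ u : ℂ → ℂ) (hu : DifferentiableOn ℂ u D) (hu0 : u 0 ≠ 0)
    (hδ : ∀ z ∈ D, δ z = z ^ g * u z) :
    ∃ r > (0 : ℝ), ∃ ε > (0 : ℝ),
      DifferentiableOn ℂ
        (fun t : Fin n → ℂ =>
          (2 * (Real.pi : ℂ) * Complex.I)⁻¹ •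
            ∮ z in C(0, r), R (z, (δ z)⁻¹ • t) * z⁻¹)
        (ball (0 : Fin n → ℂ) ε) ∧
      (fun t : Fin n → ℂ =>
          (2 * (Real.pi : ℂ) * Complex.I)⁻¹ •
            ∮ z in C(0, r), R (z, (δ z)⁻¹ • t) * z⁻¹)
        =o[𝓝 0] fun t : Fin n → ℂ => ‖t‖ ^ ((h : ℝ) / ((g : ℝ) + 1)) := by
  classical
  obtain ⟨ρ', hρ'pos, hρ'⟩ := Metric.isOpen_iff.mp hΩ 0 hΩ0
  set ρ₀ : ℝ := ρ' / 4 with hρ₀def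
  have hρ₀ : 0 < ρ₀ := by positivity
  have hball3 : closedBall (0 : ℂ × (Fin n → ℂ)) (3 * ρ₀) ⊆ Ω := by
    intro v hv
    apply hρ'
    rw [mem_ball_zero_iff]
    have := mem_closedBall_zero_iff.mp hv
    calc ‖v‖ ≤ 3 * ρ₀ := this
      _ < ρ' := by rw [hρ₀def]; linarith
  have hΩmem : ∀ (a : ℂ) (b : Fin n → ℂ), ‖a‖ ≤ ρ₀ → ‖b‖ ≤ ρ₀ → (a, b) ∈ Ω := by
    intro a b ha hb
    apply hball3
    rw [mem_closedBall_zero_iff, Prod.norm_def]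
    have : max ‖a‖ ‖b‖ ≤ ρ₀ := max_le ha hb
    calc (‖a‖ ⊔ ‖b‖) ≤ ρ₀ := this
      _ ≤ 3 * ρ₀ := by linarith
  -- bound for R on a compact neighborhood of 0
  obtain ⟨M₀, hM₀⟩ : ∃ M₀, ∀ v ∈ closedBall (0 : ℂ × (Fin n → ℂ)) (3 * ρ₀), ‖R v‖ ≤ M₀ :=
    (isCompact_closedBall _ _).exists_bound_of_continuousOn (hRhol.continuousOn.mono hball3)
  have hM₀0 : 0 ≤ M₀ :=
    (norm_nonneg _).trans (hM₀ 0 (mem_closedBall_self (by positivity)))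
  set M₁ : ℝ := M₀ / ρ₀ with hM₁def
  have hM₁0 : 0 ≤ M₁ := by positivity
  -- Cauchy estimate for the derivative of R
  have hfdR : ∀ v : ℂ × (Fin n → ℂ), ‖v‖ ≤ ρ₀ → ‖fderiv ℂ R v‖ ≤ M₁ := by
    intro v hv
    have hsub : ball v (2 * ρ₀) ⊆ closedBall (0 : ℂ × (Fin n → ℂ)) (3 * ρ₀) := by
      intro y hy
      rw [mem_closedBall_zero_iff]
      have h1 : ‖y - v‖ < 2 * ρ₀ := by
        rw [mem_ball, dist_eq_norm] at hy; exact hy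
      calc ‖y‖ = ‖y - v + v‖ := by ring_nf
        _ ≤ ‖y - v‖ + ‖v‖ := norm_add_le _ _
        _ ≤ 3 * ρ₀ := by linarith
    exact aux_norm_fderiv_le hρ₀ (hRhol.mono (hsub.trans hball3))
      (fun y hy => hM₀ y (hsub hy))
  -- lower bound for u near 0
  have hucont : ContinuousAt u 0 := hu.continuousOn.continuousAt (hD.mem_nhds hD0)
  set c : ℝ := ‖u 0‖ / 2 with hcdef
  have hc : 0 < c := half_pos (norm_pos_iff.mpr hu0)
  obtain ⟨r₂, hr₂pos, hr₂⟩ : ∃ r₂ > 0, ∀ z ∈ ball (0 : ℂ) r₂, z ∈ D ∧ c ≤ ‖u z‖ := by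
    have h1 : ∀ᶠ z in 𝓝 (0 : ℂ), z ∈ D := hD.mem_nhds hD0
    have h2 : ∀ᶠ z in 𝓝 (0 : ℂ), c ≤ ‖u z‖ := by
      have hlt : c < ‖u 0‖ := by
        rw [hcdef]; have := norm_pos_iff.mpr hu0; linarith
      have := hucont.norm.eventually_mem ((isOpen_lt' c).mem_nhds hlt)
      exact this.mono fun z hz => le_of_lt hz
    exact eventually_nhds_iff_ball.mp (h1.and h2) |>.imp fun r₂ hr₂ =>
      ⟨hr₂.1, fun z hz => hr₂.2 z hz⟩
  set r₁ : ℝ := r₂ / 2 with hr₁def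
  have hr₁pos : 0 < r₁ := by positivity
  have hball₁ : closedBall (0 : ℂ) r₁ ⊆ ball (0 : ℂ) r₂ :=
    closedBall_subset_ball (by rw [hr₁def]; linarith)
  have hDmem : ∀ z ∈ closedBall (0 : ℂ) r₁, z ∈ D := fun z hz => (hr₂ z (hball₁ hz)).1
  have hδlower : ∀ z ∈ closedBall (0 : ℂ) r₁, c * ‖z‖ ^ g ≤ ‖δ z‖ := by
    intro z hz
    rw [hδ z (hDmem z hz), norm_mul, norm_pow, mul_comm]
    exact mul_le_mul_of_nonneg_left (hr₂ z (hball₁ hz)).2 (by positivity)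
  -- radii
  set r : ℝ := min r₁ ρ₀ with hrdef
  have hr : 0 < r := lt_min hr₁pos hρ₀
  have hrr₁ : r ≤ r₁ := min_le_left _ _
  have hrρ₀ : r ≤ ρ₀ := min_le_right _ _
  set m : ℝ := min (min (c * ρ₀) r) 1 with hmdef
  have hm : 0 < m := lt_min (lt_min (mul_pos hc hρ₀) hr) one_pos
  have hmr : m ≤ r := le_trans (min_le_left _ _) (min_le_right _ _)
  have hmcρ : m ≤ c * ρ₀ := le_trans (min_le_left _ _) (min_le_left _ _)
  set ε : ℝ := m ^ (g + 1) with hεdef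
  have hε : 0 < ε := pow_pos hm _
  have hεle : ε ≤ c * ρ₀ * r ^ g := by
    rw [hεdef, pow_succ]
    calc m ^ g * m ≤ r ^ g * (c * ρ₀) :=
          mul_le_mul (pow_le_pow_left₀ hm.le hmr g) hmcρ hm.le (by positivity)
      _ = c * ρ₀ * r ^ g := by ring
  -- basic point facts
  have hpt : ∀ (t : Fin n → ℂ) (s : ℝ), 0 < s → s ≤ r → ‖t‖ ≤ c * ρ₀ * s ^ g →
      ∀ z : ℂ, s ≤ ‖z‖ → ‖z‖ ≤ r →
      δ z ≠ 0 ∧ ‖(δ z)⁻¹ • t‖ ≤ ‖t‖ / (c * s ^ g) ∧ ‖(δ z)⁻¹ • t‖ ≤ ρ₀ ∧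
        (z, (δ z)⁻¹ • t) ∈ Ω := by
    intro t s hs hsr ht z hz1 hz2
    have hzD' : z ∈ closedBall (0 : ℂ) r₁ := mem_closedBall_zero_iff.mpr (hz2.trans hrr₁)
    have hlow : c * ‖z‖ ^ g ≤ ‖δ z‖ := hδlower z hzD'
    have hlow' : c * s ^ g ≤ ‖δ z‖ :=
      le_trans (mul_le_mul_of_nonneg_left (pow_le_pow_left₀ hs.le hz1 g) hc.le) hlow
    have hcs : 0 < c * s ^ g := mul_pos hc (pow_pos hs g)
    have hδne : δ z ≠ 0 := by
      intro hzero
      rw [hzero, norm_zero] at hlow'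
      linarith
    have hnorm : ‖(δ z)⁻¹ • t‖ ≤ ‖t‖ / (c * s ^ g) := by
      rw [norm_smul, norm_inv]
      have hinv : ‖δ z‖⁻¹ ≤ (c * s ^ g)⁻¹ := by
        apply inv_anti₀ hcs hlow'
      calc ‖δ z‖⁻¹ * ‖t‖ ≤ (c * s ^ g)⁻¹ * ‖t‖ := by gcongr
        _ = ‖t‖ / (c * s ^ g) := by ring
    have hρ₀bd : ‖(δ z)⁻¹ • t‖ ≤ ρ₀ := by
      refine hnorm.trans ?_
      rw [div_le_iff₀ hcs]
      calc ‖t‖ ≤ c * ρ₀ * s ^ g := ht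
        _ = ρ₀ * (c * s ^ g) := by ring
    exact ⟨hδne, hnorm, hρ₀bd, hΩmem z _ (hz2.trans hrρ₀) hρ₀bd⟩
  -- differentiability of the integrand in z
  have hdiff_f : ∀ (t : Fin n → ℂ) (s : ℝ), 0 < s → s ≤ r → ‖t‖ ≤ c * ρ₀ * s ^ g →
      ∀ z : ℂ, s ≤ ‖z‖ → ‖z‖ ≤ r →
      DifferentiableAt ℂ (fun w => R (w, (δ w)⁻¹ • t) * w⁻¹) z := by
    intro t s hs hsr ht z hz1 hz2
    obtain ⟨hδne, -, -, hΩz⟩ := hpt t s hs hsr ht z hz1 hz2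
    have hzD : z ∈ D := hDmem z (mem_closedBall_zero_iff.mpr (hz2.trans hrr₁))
    have hzne : z ≠ 0 := by
      intro hzero
      rw [hzero, norm_zero] at hz1
      linarith
    have hδdiff : DifferentiableAt ℂ δ z := by
      have hgu : DifferentiableAt ℂ (fun w : ℂ => w ^ g * u w) z :=
        (differentiableAt_pow g).mul (hu.differentiableAt (hD.mem_nhds hzD))
      refine hgu.congr_of_eventuallyEq ?_
      filter_upwards [hD.mem_nhds hzD] with w hw
      exact hδ w hw
    have h1 : DifferentiableAt ℂ (fun w => (w, (δ w)⁻¹ • t)) z :=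
      differentiableAt_id.prodMk ((hδdiff.inv hδne).smul_const t)
    have h2 : DifferentiableAt ℂ R (z, (δ z)⁻¹ • t) :=
      hRhol.differentiableAt (hΩ.mem_nhds hΩz)
    exact (h2.comp z h1).mul (differentiableAt_id.inv hzne)
  -- contour deformation + norm estimate
  have hest : ∀ (t : Fin n → ℂ) (s : ℝ) (B : ℝ), 0 < s → s ≤ r → ‖t‖ ≤ c * ρ₀ * s ^ g →
      (∀ z ∈ sphere (0 : ℂ) s, ‖R (z, (δ z)⁻¹ • t)‖ ≤ B) →
      ‖(2 * (Real.pi : ℂ) * Complex.I)⁻¹ •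
        ∮ z in C(0, r), R (z, (δ z)⁻¹ • t) * z⁻¹‖ ≤ B := by
    intro t s B hs hsr ht hB
    have hB0 : 0 ≤ B := by
      refine (norm_nonneg _).trans (hB (s : ℂ) ?_)
      simp [abs_of_pos hs]
    have hdeform : (∮ z in C(0, r), R (z, (δ z)⁻¹ • t) * z⁻¹)
        = ∮ z in C(0, s), R (z, (δ z)⁻¹ • t) * z⁻¹ := by
      refine Complex.circleIntegral_eq_of_differentiable_on_annulus_off_countable hs hsr
        Set.countable_empty ?_ ?_
      · intro z hz
        obtain ⟨hz1, hz2⟩ := hz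
        have hzr : ‖z‖ ≤ r := mem_closedBall_zero_iff.mp hz1
        have hzs : s ≤ ‖z‖ := by
          by_contra hcon
          exact hz2 (mem_ball_zero_iff.mpr (lt_of_not_ge hcon))
        exact (hdiff_f t s hs hsr ht z hzs hzr).continuousAt.continuousWithinAt
      · intro z hz
        obtain ⟨⟨hz1, hz2⟩, -⟩ := hz
        have hzr : ‖z‖ ≤ r := (mem_ball_zero_iff.mp hz1).le
        have hzs : s ≤ ‖z‖ := by
          by_contra hcon
          exact hz2 (mem_closedBall_zero_iff.mpr (le_of_not_ge hcon))
        exact hdiff_f t s hs hsr ht z hzs hzr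
    rw [hdeform, norm_smul]
    have hsphere : ∀ z ∈ sphere (0 : ℂ) s, ‖R (z, (δ z)⁻¹ • t) * z⁻¹‖ ≤ B * s⁻¹ := by
      intro z hz
      have hzn : ‖z‖ = s := by simpa [mem_sphere, dist_eq_norm] using hz
      rw [norm_mul, norm_inv, hzn]
      gcongr
      exact hB z hz
    have hint := circleIntegral.norm_integral_le_of_norm_le_const hs.le hsphere
    have hnorm2pi : ‖(2 * (Real.pi : ℂ) * Complex.I)⁻¹‖ = (2 * Real.pi)⁻¹ := by
      rw [norm_inv, norm_mul, norm_mul, Complex.norm_I, mul_one]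
      simp [Complex.norm_real, abs_of_nonneg Real.pi_nonneg]
    rw [hnorm2pi]
    calc (2 * Real.pi)⁻¹ * ‖∮ z in C(0, s), R (z, (δ z)⁻¹ • t) * z⁻¹‖
        ≤ (2 * Real.pi)⁻¹ * (2 * Real.pi * s * (B * s⁻¹)) :=
          mul_le_mul_of_nonneg_left hint (by positivity)
      _ = B := by
          field_simp
  refine ⟨r, hr, ε, hε, ?_, ?_⟩
  · -- holomorphy in t
    have hrw : (fun t : Fin n → ℂ =>
        (2 * (Real.pi : ℂ) * Complex.I)⁻¹ • ∮ z in C(0, r), R (z, (δ z)⁻¹ • t) * z⁻¹)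
        = fun t : Fin n → ℂ => (2 * (Real.pi : ℂ) * Complex.I)⁻¹ •
          ∫ θ in Set.Ioc 0 (2 * Real.pi),
            deriv (circleMap 0 r) θ •
              (R (circleMap 0 r θ, (δ (circleMap 0 r θ))⁻¹ • t) * (circleMap 0 r θ)⁻¹) := by
      funext t
      rw [circleIntegral, intervalIntegral.integral_of_le Real.two_pi_pos.le]
    rw [hrw]
    -- circle facts
    have hzr : ∀ θ : ℝ, ‖circleMap 0 r θ‖ = r := fun θ => by
      simp [norm_circleMap_zero, abs_of_pos hr]
    have hzne : ∀ θ : ℝ, circleMap 0 r θ ≠ 0 := fun θ => circleMap_ne_center hr.ne'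
    have hδne : ∀ θ : ℝ, δ (circleMap 0 r θ) ≠ 0 := fun θ =>
      (hpt 0 r hr le_rfl (by
        rw [norm_zero]
        exact (mul_pos (mul_pos hc hρ₀) (pow_pos hr g)).le) _ (hzr θ).ge (hzr θ).le).1
    have hmapD : ∀ θ : ℝ, circleMap 0 r θ ∈ D := fun θ =>
      hDmem _ (mem_closedBall_zero_iff.mpr ((hzr θ).le.trans hrr₁))
    have hδD_cont : ContinuousOn δ D :=
      ContinuousOn.congr ((continuousOn_id.pow g).mul hu.continuousOn)
        (fun z hz => hδ z hz)
    have hcm_cont : Continuous fun θ : ℝ => circleMap 0 r θ := continuous_circleMap 0 r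
    have hδcm : Continuous fun θ : ℝ => δ (circleMap 0 r θ) :=
      hδD_cont.comp_continuous hcm_cont hmapD
    have hWcont : Continuous fun θ : ℝ => (δ (circleMap 0 r θ))⁻¹ := hδcm.inv₀ hδne
    have hinv_cont : Continuous fun θ : ℝ => (circleMap 0 r θ)⁻¹ := hcm_cont.inv₀ hzne
    have hdc_cont : Continuous fun θ : ℝ => deriv (circleMap 0 r) θ := by
      simp only [deriv_circleMap]
      exact hcm_cont.mul continuous_const
    have hεr : ∀ (x : Fin n → ℂ), ‖x‖ < ε → ‖x‖ ≤ c * ρ₀ * r ^ g := fun x hx =>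
      hx.le.trans hεle
    have hΩcirc : ∀ (x : Fin n → ℂ), ‖x‖ < ε → ∀ θ : ℝ,
        (circleMap 0 r θ, (δ (circleMap 0 r θ))⁻¹ • x) ∈ Ω := fun x hx θ =>
      (hpt x r hr le_rfl (hεr x hx) _ (hzr θ).ge (hzr θ).le).2.2.2
    have hρ₀circ : ∀ (x : Fin n → ℂ), ‖x‖ < ε → ∀ θ : ℝ,
        ‖(δ (circleMap 0 r θ))⁻¹ • x‖ ≤ ρ₀ := fun x hx θ =>
      (hpt x r hr le_rfl (hεr x hx) _ (hzr θ).ge (hzr θ).le).2.2.1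
    have hFcont : ∀ (x : Fin n → ℂ), ‖x‖ < ε → Continuous fun θ : ℝ =>
        deriv (circleMap 0 r) θ •
          (R (circleMap 0 r θ, (δ (circleMap 0 r θ))⁻¹ • x) * (circleMap 0 r θ)⁻¹) := by
      intro x hx
      apply hdc_cont.smul
      refine Continuous.mul ?_ hinv_cont
      exact hRhol.continuousOn.comp_continuous
        (hcm_cont.prodMk (hWcont.smul continuous_const)) (fun θ => hΩcirc x hx θ)
    -- the derivative candidate
    set A₁ : (Fin n → ℂ) →L[ℂ] ℂ × (Fin n → ℂ) :=
      (0 : (Fin n → ℂ) →L[ℂ] ℂ).prod (ContinuousLinearMap.id ℂ (Fin n → ℂ)) with hA₁def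
    have hA₁apply : ∀ (w : ℂ) (v : Fin n → ℂ), (w • A₁) v = (0, w • v) := by
      intro w v
      simp [hA₁def, Prod.smul_def]
    have hA₁norm : ∀ w : ℂ, ‖w • A₁‖ ≤ ‖w‖ := by
      intro w
      refine ContinuousLinearMap.opNorm_le_bound _ (norm_nonneg w) fun v => ?_
      rw [hA₁apply w v, Prod.norm_def, norm_zero, norm_smul]
      rw [max_eq_right (by positivity)]
    set F' : (Fin n → ℂ) → ℝ → (Fin n → ℂ) →L[ℂ] ℂ := fun x θ =>
      (deriv (circleMap 0 r) θ * (circleMap 0 r θ)⁻¹) •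
        ((fderiv ℂ R (circleMap 0 r θ, (δ (circleMap 0 r θ))⁻¹ • x)).comp
          ((δ (circleMap 0 r θ))⁻¹ • A₁)) with hF'def
    have hHasF : ∀ (x : Fin n → ℂ), ‖x‖ < ε → ∀ θ : ℝ,
        HasFDerivAt (fun x' : Fin n → ℂ =>
          deriv (circleMap 0 r) θ •
            (R (circleMap 0 r θ, (δ (circleMap 0 r θ))⁻¹ • x') * (circleMap 0 r θ)⁻¹))
          (F' x θ) x := by
      intro x hx θ
      have hinner : HasFDerivAt
          (fun x' : Fin n → ℂ => (circleMap 0 r θ, (δ (circleMap 0 r θ))⁻¹ • x'))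
          ((δ (circleMap 0 r θ))⁻¹ • A₁) x := by
        have hid : HasFDerivAt (fun v : Fin n → ℂ => v)
            (ContinuousLinearMap.id ℂ (Fin n → ℂ)) x := hasFDerivAt_id x
        have hh := (hasFDerivAt_const (circleMap 0 r θ) x).prodMk
          (hid.const_smul ((δ (circleMap 0 r θ))⁻¹))
        have hA : (δ (circleMap 0 r θ))⁻¹ • A₁ = ContinuousLinearMap.prod 0
            ((δ (circleMap 0 r θ))⁻¹ • ContinuousLinearMap.id ℂ (Fin n → ℂ)) := by
          refine ContinuousLinearMap.ext fun v => ?_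
          simp [hA₁apply]
        rw [hA]
        exact hh
      have hR' : HasFDerivAt R
          (fderiv ℂ R (circleMap 0 r θ, (δ (circleMap 0 r θ))⁻¹ • x))
          (circleMap 0 r θ, (δ (circleMap 0 r θ))⁻¹ • x) :=
        (hRhol.differentiableAt (hΩ.mem_nhds (hΩcirc x hx θ))).hasFDerivAt
      have hcomp := (hR'.comp x hinner).mul_const ((circleMap 0 r θ)⁻¹)
      have hfinal := hcomp.const_smul (deriv (circleMap 0 r) θ)
      rw [hF'def]
      simp only [mul_smul]
      exact hfinal
    intro x₀ hx₀mem
    have hx₀ : ‖x₀‖ < ε := mem_ball_zero_iff.mp hx₀mem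
    have hε' : 0 < ε - ‖x₀‖ := by linarith
    have hballsub : ∀ x ∈ ball x₀ (ε - ‖x₀‖), ‖x‖ < ε := by
      intro x hx
      have : ‖x - x₀‖ < ε - ‖x₀‖ := by rwa [mem_ball, dist_eq_norm] at hx
      calc ‖x‖ = ‖x - x₀ + x₀‖ := by ring_nf
        _ ≤ ‖x - x₀‖ + ‖x₀‖ := norm_add_le _ _
        _ < ε := by linarith
    set μ : Measure ℝ := volume.restrict (Set.Ioc 0 (2 * Real.pi)) with hμdef
    have hF_meas : ∀ᶠ x in 𝓝 x₀, AEStronglyMeasurable (fun θ : ℝ =>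
        deriv (circleMap 0 r) θ •
          (R (circleMap 0 r θ, (δ (circleMap 0 r θ))⁻¹ • x) * (circleMap 0 r θ)⁻¹)) μ := by
      filter_upwards [ball_mem_nhds x₀ hε'] with x hx
      exact (hFcont x (hballsub x hx)).aestronglyMeasurable
    have hF_int : Integrable (fun θ : ℝ =>
        deriv (circleMap 0 r) θ •
          (R (circleMap 0 r θ, (δ (circleMap 0 r θ))⁻¹ • x₀) * (circleMap 0 r θ)⁻¹)) μ :=
      (hFcont x₀ hx₀).integrableOn_Ioc
    have hF'_meas : AEStronglyMeasurable (F' x₀) μ := by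
      letI : SecondCountableTopology ((ℂ × (Fin n → ℂ)) →L[ℂ] ℂ) := by
        have : ProperSpace ((ℂ × (Fin n → ℂ)) →L[ℂ] ℂ) := FiniteDimensional.proper ℂ _
        exact secondCountable_of_proper
      have m₁ : AEStronglyMeasurable (fun θ : ℝ =>
          fderiv ℂ R (circleMap 0 r θ, (δ (circleMap 0 r θ))⁻¹ • x₀)) μ :=
        ((measurable_fderiv ℂ R).comp
          (hcm_cont.prodMk (hWcont.smul continuous_const)).measurable).aestronglyMeasurable
      have m₂ : AEStronglyMeasurable (fun θ : ℝ =>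
          (fderiv ℂ R (circleMap 0 r θ, (δ (circleMap 0 r θ))⁻¹ • x₀)).comp
            ((δ (circleMap 0 r θ))⁻¹ • A₁)) μ := by
        have hpair : AEStronglyMeasurable (fun θ : ℝ =>
            ((fderiv ℂ R (circleMap 0 r θ, (δ (circleMap 0 r θ))⁻¹ • x₀)),
              ((δ (circleMap 0 r θ))⁻¹ • A₁))) μ :=
          m₁.prodMk ((hWcont.smul continuous_const).aestronglyMeasurable)
        exact (isBoundedBilinearMap_comp.continuous).comp_aestronglyMeasurable hpair
      exact ((hdc_cont.mul hinv_cont).aestronglyMeasurable).smul m₂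
    have hbound : ∀ᵐ θ ∂μ, ∀ x ∈ ball x₀ (ε - ‖x₀‖), ‖F' x θ‖ ≤ M₁ * (c * r ^ g)⁻¹ := by
      refine ae_of_all _ fun θ x hx => ?_
      have hxε : ‖x‖ < ε := hballsub x hx
      have hPρ₀ : ‖(circleMap 0 r θ, (δ (circleMap 0 r θ))⁻¹ • x)‖ ≤ ρ₀ := by
        rw [Prod.norm_def]
        exact max_le ((hzr θ).le.trans hrρ₀) (hρ₀circ x hxε θ)
      have hfd := hfdR _ hPρ₀
      have hδnorm : ‖(δ (circleMap 0 r θ))⁻¹‖ ≤ (c * r ^ g)⁻¹ := by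
        rw [norm_inv]
        apply inv_anti₀ (mul_pos hc (pow_pos hr g))
        have := hδlower (circleMap 0 r θ)
          (mem_closedBall_zero_iff.mpr ((hzr θ).le.trans hrr₁))
        rwa [hzr θ] at this
      have hscal : ‖deriv (circleMap 0 r) θ * (circleMap 0 r θ)⁻¹‖ = 1 := by
        rw [norm_mul, norm_inv, hzr θ, deriv_circleMap, norm_mul, Complex.norm_I, mul_one,
          hzr θ]
        field_simp
      simp only [hF'def]
      refine ContinuousLinearMap.opNorm_le_bound _
        (mul_nonneg hM₁0 (inv_nonneg.mpr (mul_pos hc (pow_pos hr g)).le)) fun v => ?_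
      rw [ContinuousLinearMap.smul_apply, ContinuousLinearMap.comp_apply, hA₁apply,
        norm_smul, hscal, one_mul]
      calc ‖fderiv ℂ R (circleMap 0 r θ, (δ (circleMap 0 r θ))⁻¹ • x)
              ((0 : ℂ), (δ (circleMap 0 r θ))⁻¹ • v)‖
          ≤ ‖fderiv ℂ R (circleMap 0 r θ, (δ (circleMap 0 r θ))⁻¹ • x)‖ *
              ‖(((0 : ℂ), (δ (circleMap 0 r θ))⁻¹ • v) : ℂ × (Fin n → ℂ))‖ :=
            ContinuousLinearMap.le_opNorm _ _
        _ ≤ M₁ * ((c * r ^ g)⁻¹ * ‖v‖) := by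
            have hv : ‖(((0 : ℂ), (δ (circleMap 0 r θ))⁻¹ • v) : ℂ × (Fin n → ℂ))‖
                ≤ (c * r ^ g)⁻¹ * ‖v‖ := by
              rw [Prod.norm_def, norm_zero, norm_smul]
              rw [max_eq_right (by positivity)]
              exact mul_le_mul_of_nonneg_right hδnorm (norm_nonneg v)
            exact mul_le_mul hfd hv (norm_nonneg _) hM₁0
        _ = M₁ * (c * r ^ g)⁻¹ * ‖v‖ := by ring
    have hbound_int : Integrable (fun _ : ℝ => M₁ * (c * r ^ g)⁻¹) μ := by
      rw [hμdef]
      exact integrableOn_const measure_Ioc_lt_top.ne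
    have hdiff : ∀ᵐ θ ∂μ, ∀ x ∈ ball x₀ (ε - ‖x₀‖),
        HasFDerivAt (fun x' : Fin n → ℂ =>
          deriv (circleMap 0 r) θ •
            (R (circleMap 0 r θ, (δ (circleMap 0 r θ))⁻¹ • x') * (circleMap 0 r θ)⁻¹))
          (F' x θ) x :=
      ae_of_all _ fun θ x hx => hHasF x (hballsub x hx) θ
    have key := hasFDerivAt_integral_of_dominated_of_fderiv_le (ball_mem_nhds x₀ hε') hF_meas hF_int hF'_meas
      hbound hbound_int hdiff
    exact (key.differentiableAt.fun_const_smul _).differentiableWithinAt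
  · -- little-o estimate
    rw [isLittleO_iff]
    intro C hC
    set K : ℝ := max 1 c⁻¹ with hKdef
    have hK1 : 1 ≤ K := le_max_left _ _
    have hK0 : 0 < K := lt_of_lt_of_le one_pos hK1
    have hKh : 0 < K ^ h := pow_pos hK0 _
    obtain ⟨η, hηpos, hRb⟩ : ∃ η > 0, ∀ v : ℂ × (Fin n → ℂ), ‖v‖ < η →
        ‖R v‖ ≤ C / K ^ h * ‖v‖ ^ h := by
      have := isLittleO_iff.mp hRo (div_pos hC hKh)
      obtain ⟨η, hηpos, hη⟩ := eventually_nhds_iff_ball.mp this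
      refine ⟨η, hηpos, fun v hv => ?_⟩
      have := hη v (mem_ball_zero_iff.mpr hv)
      rwa [Real.norm_of_nonneg (by positivity : (0:ℝ) ≤ ‖v‖ ^ h)] at this
    -- value at 0 is 0
    have hc00 : ‖(2 * (Real.pi : ℂ) * Complex.I)⁻¹ •
        ∮ z in C(0, r), R (z, (δ z)⁻¹ • (0 : Fin n → ℂ)) * z⁻¹‖ ≤ 0 := by
      refine le_of_forall_pos_le_add fun ε' hε' => ?_
      rw [zero_add]
      obtain ⟨η', hη'pos, hR'⟩ : ∃ η' > 0, ∀ v : ℂ × (Fin n → ℂ), ‖v‖ < η' →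
          ‖R v‖ ≤ ε' * ‖v‖ ^ h := by
        have := isLittleO_iff.mp hRo hε'
        obtain ⟨η', hη'pos, hη'⟩ := eventually_nhds_iff_ball.mp this
        refine ⟨η', hη'pos, fun v hv => ?_⟩
        have := hη' v (mem_ball_zero_iff.mpr hv)
        rwa [Real.norm_of_nonneg (by positivity : (0:ℝ) ≤ ‖v‖ ^ h)] at this
      set s : ℝ := min (min (η' / 2) r) 1 with hsdef
      have hs : 0 < s := lt_min (lt_min (by positivity) hr) one_pos
      have hsr : s ≤ r := le_trans (min_le_left _ _) (min_le_right _ _)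
      have hsη : s < η' := lt_of_le_of_lt (le_trans (min_le_left _ _) (min_le_left _ _))
        (by linarith)
      have hs1 : s ≤ 1 := min_le_right _ _
      refine hest 0 s ε' hs hsr (by
        rw [norm_zero]
        exact (mul_pos (mul_pos hc hρ₀) (pow_pos hs g)).le) ?_
      intro z hz
      have hzn : ‖z‖ = s := by simpa [mem_sphere, dist_eq_norm] using hz
      have hz0 : (δ z)⁻¹ • (0 : Fin n → ℂ) = 0 := smul_zero _
      rw [hz0]
      have hvn : ‖((z, 0) : ℂ × (Fin n → ℂ))‖ = s := by
        rw [Prod.norm_def]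
        simp only [norm_zero, hzn]
        exact max_eq_left hs.le
      have := hR' (z, 0) (by rw [hvn]; exact hsη)
      rw [hvn] at this
      calc ‖R (z, 0)‖ ≤ ε' * s ^ h := this
        _ ≤ ε' * 1 := by
            gcongr
            exact pow_le_one₀ hs.le hs1
        _ = ε' := mul_one _
    -- main eventual bound
    set m₂ : ℝ := min m (η / (2 * K)) with hm₂def
    have hm₂ : 0 < m₂ := lt_min hm (div_pos hηpos (mul_pos two_pos hK0))
    set ε₂ : ℝ := m₂ ^ (g + 1) with hε₂def
    have hε₂ : 0 < ε₂ := pow_pos hm₂ _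
    rw [eventually_nhds_iff_ball]
    refine ⟨ε₂, hε₂, fun t ht => ?_⟩
    rw [mem_ball_zero_iff] at ht
    rcases eq_or_ne t 0 with rfl | htne
    · refine le_trans hc00 ?_
      positivity
    · set ρ : ℝ := ‖t‖ ^ ((1 : ℝ) / ((g : ℝ) + 1)) with hρdef
      have htpos : 0 < ‖t‖ := norm_pos_iff.mpr htne
      have hgne : ((g : ℝ) + 1) ≠ 0 := by positivity
      have hρpos : 0 < ρ := Real.rpow_pos_of_pos htpos _
      have hρpow : ρ ^ (g + 1) = ‖t‖ := by
        rw [hρdef, ← Real.rpow_natCast (‖t‖ ^ ((1 : ℝ) / ((g : ℝ) + 1))) (g + 1),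
          ← Real.rpow_mul htpos.le]
        push_cast
        rw [one_div_mul_cancel hgne, Real.rpow_one]
      have hρlt : ρ < m₂ := by
        have h1 : ‖t‖ < m₂ ^ (g + 1) := ht
        have h2 : ρ < (m₂ ^ (g + 1) : ℝ) ^ ((1 : ℝ) / ((g : ℝ) + 1)) := by
          rw [hρdef]
          exact Real.rpow_lt_rpow (norm_nonneg t) h1 (by positivity)
        have h3 : ((m₂ ^ (g + 1) : ℝ)) ^ ((1 : ℝ) / ((g : ℝ) + 1)) = m₂ := by
          rw [← Real.rpow_natCast m₂ (g + 1), ← Real.rpow_mul hm₂.le]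
          push_cast
          rw [mul_one_div_cancel hgne, Real.rpow_one]
        rwa [h3] at h2
      have hρm : ρ < m := lt_of_lt_of_le hρlt (min_le_left _ _)
      have hρr : ρ ≤ r := le_trans hρm.le hmr
      have hρcρ : ρ ≤ c * ρ₀ := le_trans hρm.le hmcρ
      have htle : ‖t‖ ≤ c * ρ₀ * ρ ^ g := by
        rw [← hρpow, pow_succ]
        calc ρ ^ g * ρ ≤ ρ ^ g * (c * ρ₀) := by gcongr
          _ = c * ρ₀ * ρ ^ g := by ring
      have hρη : K * ρ < η := by
        have : ρ < η / (2 * K) := lt_of_lt_of_le hρlt (min_le_right _ _)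
        calc K * ρ < K * (η / (2 * K)) := by gcongr
          _ = η / 2 := by field_simp
          _ < η := by linarith
      have hbdd : ∀ z ∈ sphere (0 : ℂ) ρ, ‖R (z, (δ z)⁻¹ • t)‖ ≤ C * ρ ^ h := by
        intro z hz
        have hzn : ‖z‖ = ρ := by simpa [mem_sphere, dist_eq_norm] using hz
        obtain ⟨-, hsm, -, -⟩ := hpt t ρ hρpos hρr htle z hzn.ge (hzn.le.trans hρr)
        have hsm' : ‖(δ z)⁻¹ • t‖ ≤ ρ / c := by
          refine hsm.trans (le_of_eq ?_)
          rw [← hρpow, pow_succ,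
            div_eq_div_iff (mul_pos hc (pow_pos hρpos g)).ne' hc.ne']
          ring
        have hPle : ‖((z, (δ z)⁻¹ • t) : ℂ × (Fin n → ℂ))‖ ≤ K * ρ := by
          rw [Prod.norm_def]
          refine max_le ?_ ?_
          · rw [hzn]
            nlinarith [hK1, hρpos]
          · refine hsm'.trans ?_
            rw [div_eq_inv_mul]
            gcongr
            exact le_max_right _ _
        have hPη : ‖((z, (δ z)⁻¹ • t) : ℂ × (Fin n → ℂ))‖ < η := lt_of_le_of_lt hPle hρη
        calc ‖R (z, (δ z)⁻¹ • t)‖ ≤ C / K ^ h * ‖((z, (δ z)⁻¹ • t) : ℂ × (Fin n → ℂ))‖ ^ h :=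
              hRb _ hPη
          _ ≤ C / K ^ h * (K * ρ) ^ h := by
              gcongr
          _ = C * ρ ^ h := by
              rw [mul_pow]
              field_simp <;> ring
      have hfin := hest t ρ (C * ρ ^ h) hρpos hρr htle hbdd
      refine hfin.trans ?_
      have hρh : ρ ^ h = ‖t‖ ^ ((h : ℝ) / ((g : ℝ) + 1)) := by
        rw [hρdef, ← Real.rpow_natCast (‖t‖ ^ ((1 : ℝ) / ((g : ℝ) + 1))) h,
          ← Real.rpow_mul htpos.le]
        congr 1
        field_simp
      rw [hρh, Real.norm_of_nonneg (Real.rpow_nonneg (norm_nonneg t) _)]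
end
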